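/- For a digraph D of order n and integer k ≥ 2: (i) 0 ≤ λ_k(D) + λ_k(Dᶜ) ≤ n − 1, and the lower bound holds with equality if and only if λ(D) = λ(Dᶜ) = 0; (ii) 0 ≤ λ_k(D)·λ_k(Dᶜ) ≤ ((n−1)/2)², with the lower bound attained if and only if λ(D) = 0 or λ(Dᶜ) = 0. -/

import Mathlib

open Relation Set

variable {V : Type*}

/-- Reachability in a digraph using only arcs from the arc set `B`. -/
def ArcReach (B : Set (V × V)) : V → V → Prop :=
  Relation.ReflTransGen (fun x y => (x, y) ∈ B)

/-- A digraph, given by its arc set on vertex type `V`, is strongly connected. -/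
def IsStrong (A : Set (V × V)) : Prop :=
  ∀ u v : V, ArcReach A u v

/-- `(W, B)` is an `S`-strong subgraph of the digraph with arc set `A`:
a strongly connected subdigraph whose vertex set contains `S`. -/
def SStrongSub (A : Set (V × V)) (S W : Set V) (B : Set (V × V)) : Prop :=
  B ⊆ A ∧ S ⊆ W ∧ (∀ e ∈ B, e.1 ∈ W ∧ e.2 ∈ W) ∧
    ∀ u ∈ W, ∀ v ∈ W, ArcReach B u v

/-- `λ_S(D)`: the maximum number of pairwise arc-disjoint `S`-strong subgraphs. -/
noncomputable def lamS (A : Set (V × V)) (S : Set V) : ℕ :=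
  sSup {t | ∃ (W : Fin t → Set V) (B : Fin t → Set (V × V)),
    (∀ i, SStrongSub A S (W i) (B i)) ∧
    ∀ i j, i ≠ j → Disjoint (B i) (B j)}

/-- `κ_S(D)`: the maximum number of pairwise internally disjoint
(arc-disjoint, vertex sets meeting exactly in `S`) `S`-strong subgraphs. -/
noncomputable def kapS (A : Set (V × V)) (S : Set V) : ℕ :=
  sSup {t | ∃ (W : Fin t → Set V) (B : Fin t → Set (V × V)),
    (∀ i, SStrongSub A S (W i) (B i)) ∧
    (∀ i j, i ≠ j → Disjoint (B i) (B j)) ∧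
    ∀ i j, i ≠ j → W i ∩ W j = S}

/-- Strong subgraph `k`-arc-connectivity `λ_k(D)`. -/
noncomputable def lamK [Fintype V] (A : Set (V × V)) (k : ℕ) : ℕ :=
  sInf {m | ∃ S : Finset V, S.card = k ∧ m = lamS A ↑S}

/-- Strong subgraph `k`-connectivity `κ_k(D)`. -/
noncomputable def kapK [Fintype V] (A : Set (V × V)) (k : ℕ) : ℕ :=
  sInf {m | ∃ S : Finset V, S.card = k ∧ m = kapS A ↑S}

/-- An arc set is (the arc set of) a digraph: no loops. -/
def IsDigraph {V : Type*} (A : Set (V × V)) : Prop := ∀ e ∈ A, e.1 ≠ e.2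

/-- The complement digraph `Dᶜ`. -/
def complArcs {V : Type*} (A : Set (V × V)) : Set (V × V) :=
  {p | p.1 ≠ p.2 ∧ p ∉ A}

/-- The arc-strong connectivity `λ(D)`; `λ(D) = 0` iff `D` is not strong. -/
noncomputable def arcConn {V : Type*} [Fintype V] (A : Set (V × V)) : ℕ :=
  sInf {m | ∃ F : Finset (V × V), ↑F ⊆ A ∧ F.card = m ∧ ¬ IsStrong (A \ ↑F)}

section Aux

variable {V : Type*}

lemma arcReach_mono {B C : Set (V × V)} (h : B ⊆ C) {u v : V} (hr : ArcReach B u v) :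
    ArcReach C u v :=
  by
  unfold ArcReach at hr ⊢
  induction hr with
  | refl => exact Relation.ReflTransGen.refl
  | tail _ hbc ih => exact ih.tail (h hbc)

/-- The defining set for `lamS`. -/
def lamSSet (A : Set (V × V)) (S : Set V) : Set ℕ :=
  {t | ∃ (W : Fin t → Set V) (B : Fin t → Set (V × V)),
    (∀ i, SStrongSub A S (W i) (B i)) ∧
    ∀ i j, i ≠ j → Disjoint (B i) (B j)}

lemma lamS_eq (A : Set (V × V)) (S : Set V) : lamS A S = sSup (lamSSet A S) := rfl

lemma zero_mem_lamSSet (A : Set (V × V)) (S : Set V) : 0 ∈ lamSSet A S :=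
  ⟨Fin.elim0, Fin.elim0, fun i => i.elim0, fun i => i.elim0⟩

lemma lamSSet_bound [Fintype V] {A : Set (V × V)} {S : Set V} {u w : V}
    (hu : u ∈ S) (hw : w ∈ S) (huw : u ≠ w) {t : ℕ} (ht : t ∈ lamSSet A S) :
    t ≤ (Set.toFinite {v | (u, v) ∈ A}).toFinset.card := by
  classical
  obtain ⟨W, B, hs, hd⟩ := ht
  have hc : ∀ i : Fin t, ∃ c, (u, c) ∈ B i := by
    intro i
    obtain ⟨hBA, hSW, hWB, hstr⟩ := hs i
    rcases Relation.ReflTransGen.cases_head (hstr u (hSW hu) w (hSW hw)) with h | ⟨c, hc, _⟩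
    · exact absurd h huw
    · exact ⟨c, hc⟩
  choose f hf using hc
  have hinj : Function.Injective f := by
    intro i j hij
    by_contra hne
    exact Set.disjoint_left.mp (hd i j hne) (hf i) (hij ▸ hf j)
  have := Finset.card_le_card_of_injOn
    (s := (Finset.univ : Finset (Fin t))) (t := (Set.toFinite {v | (u, v) ∈ A}).toFinset) f
    (fun i _ => by simpa using (hs i).1 (hf i)) (hinj.injOn)
  simpa using this

lemma lamS_le [Fintype V] {A : Set (V × V)} {S : Set V} {u w : V}
    (hu : u ∈ S) (hw : w ∈ S) (huw : u ≠ w) :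
    lamS A S ≤ (Set.toFinite {v | (u, v) ∈ A}).toFinset.card := by
  rw [lamS_eq]
  exact csSup_le ⟨0, zero_mem_lamSSet A S⟩ (fun t ht => lamSSet_bound hu hw huw ht)

lemma one_le_lamS [Fintype V] {A : Set (V × V)} {S : Set V} {u w : V}
    (hu : u ∈ S) (hw : w ∈ S) (huw : u ≠ w) (hstrong : IsStrong A) :
    1 ≤ lamS A S := by
  rw [lamS_eq]
  apply le_csSup
  · exact ⟨_, fun t ht => lamSSet_bound hu hw huw ht⟩
  · refine ⟨fun _ => Set.univ, fun _ => A, fun i => ⟨le_refl A, Set.subset_univ _,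
      fun e _ => ⟨trivial, trivial⟩, fun a _ b _ => hstrong a b⟩, fun i j hij => ?_⟩
    exact absurd (Subsingleton.elim i j) hij

lemma lamK_le_lamS [Fintype V] {A : Set (V × V)} {k : ℕ} {S : Finset V}
    (hS : S.card = k) : lamK A k ≤ lamS A (↑S : Set V) :=
  Nat.sInf_le ⟨S, hS, rfl⟩

lemma not_isStrong_of_card {A : Set (V × V)} [Fintype V] (hn : 2 ≤ Fintype.card V)
    (hA : A = ∅) : ¬ IsStrong A := by
  obtain ⟨u, v, huv⟩ := Fintype.exists_pair_of_one_lt_card hn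
  intro hs
  rcases Relation.ReflTransGen.cases_head (hs u v) with h | ⟨c, hc, _⟩
  · exact huv h
  · rw [hA] at hc; exact hc

lemma arcConn_eq_zero_iff [Fintype V] (A : Set (V × V)) (hn : 2 ≤ Fintype.card V) :
    arcConn A = 0 ↔ ¬ IsStrong A := by
  constructor
  · intro h
    have hne : {m | ∃ F : Finset (V × V), ↑F ⊆ A ∧ F.card = m ∧ ¬ IsStrong (A \ ↑F)}.Nonempty := by
      refine ⟨(Set.toFinite A).toFinset.card, (Set.toFinite A).toFinset, ?_, rfl, ?_⟩
      · simp
      · apply not_isStrong_of_card hn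
        simp
    have := Nat.sInf_mem hne
    rw [show sInf _ = arcConn A from rfl, h] at this
    obtain ⟨F, hFA, hF0, hns⟩ := this
    rw [Finset.card_eq_zero] at hF0
    subst hF0
    simpa using hns
  · intro h
    have : 0 ∈ {m | ∃ F : Finset (V × V), ↑F ⊆ A ∧ F.card = m ∧ ¬ IsStrong (A \ ↑F)} :=
      ⟨∅, by simp, by simp, by simpa using h⟩
    exact Nat.le_zero.mp (Nat.sInf_le this)

lemma lamK_eq_zero_iff [Fintype V] (A : Set (V × V)) {n k : ℕ}
    (hn : Fintype.card V = n) (h2 : 2 ≤ k) (hk : k ≤ n) :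
    lamK A k = 0 ↔ ¬ IsStrong A := by
  classical
  constructor
  · intro h hstrong
    have hne : {m | ∃ S : Finset V, S.card = k ∧ m = lamS A ↑S}.Nonempty := by
      obtain ⟨S, _, hScard⟩ := Finset.exists_superset_card_eq (s := (∅ : Finset V)) (n := k)
        (by simp) (by omega)
      exact ⟨lamS A ↑S, S, hScard, rfl⟩
    have hmem := Nat.sInf_mem hne
    rw [show sInf _ = lamK A k from rfl, h] at hmem
    obtain ⟨S, hScard, hS0⟩ := hmem
    have : 1 < S.card := by omega
    obtain ⟨u, hu, w, hw, huw⟩ := Finset.one_lt_card.mp this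
    have := one_le_lamS (A := A) (S := (↑S : Set V)) (by simpa using hu)
      (by simpa using hw) huw hstrong
    omega
  · intro h
    rw [IsStrong] at h
    push_neg at h
    obtain ⟨u, v, huv⟩ := h
    have hne : u ≠ v := by rintro rfl; exact huv Relation.ReflTransGen.refl
    obtain ⟨S, hSsub, hScard⟩ := Finset.exists_superset_card_eq (s := ({u, v} : Finset V)) (n := k)
      (by rw [Finset.card_insert_of_notMem (by simpa using hne), Finset.card_singleton]
          omega)
      (by omega)
    have hlamS : lamS A (↑S : Set V) = 0 := by
      rw [lamS_eq]
      apply Nat.le_zero.mp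
      apply csSup_le ⟨0, zero_mem_lamSSet A _⟩
      intro t ht
      by_contra hpos
      obtain ⟨W, B, hs, _⟩ := ht
      have ht1 : 0 < t := by omega
      obtain ⟨hBA, hSW, _, hstr⟩ := hs ⟨0, ht1⟩
      have hu : u ∈ W ⟨0, ht1⟩ := hSW (by simpa using hSsub (by simp))
      have hv : v ∈ W ⟨0, ht1⟩ := hSW (by simpa using hSsub (by simp))
      exact huv (arcReach_mono hBA (hstr u hu v hv))
    exact Nat.le_zero.mp (hlamS ▸ lamK_le_lamS hScard)

lemma outdeg_sum_le [Fintype V] (A : Set (V × V)) (hA : IsDigraph A) (u : V) :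
    (Set.toFinite {v | (u, v) ∈ A}).toFinset.card +
      (Set.toFinite {v | (u, v) ∈ complArcs A}).toFinset.card ≤ Fintype.card V - 1 := by
  classical
  rw [← Finset.card_union_of_disjoint]
  · refine le_trans (Finset.card_le_card (t := Finset.univ.erase u) ?_) ?_
    · intro v hv
      simp only [Finset.mem_union, Set.Finite.mem_toFinset, Set.mem_setOf_eq, complArcs] at hv
      refine Finset.mem_erase.mpr ⟨?_, Finset.mem_univ _⟩
      rcases hv with h | ⟨h, _⟩
      · exact fun e => hA (u, v) h (by simp [e])
      · exact fun e => h (by simp [e])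
    · rw [Finset.card_erase_of_mem (Finset.mem_univ u), Finset.card_univ]
  · rw [Finset.disjoint_left]
    intro v h1 h2
    simp only [Set.Finite.mem_toFinset, Set.mem_setOf_eq, complArcs] at h1 h2
    exact h2.2 h1

end Aux

/-- Nordhaus–Gaddum type bounds:
(i) `0 ≤ λ_k(D) + λ_k(Dᶜ) ≤ n − 1`, with the lower bound attained iff
`λ(D) = λ(Dᶜ) = 0`; (ii) `0 ≤ λ_k(D)·λ_k(Dᶜ) ≤ ((n−1)/2)²`, with the lower
bound attained iff `λ(D) = 0` or `λ(Dᶜ) = 0`. -/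
theorem lamK_nordhaus_gaddum {V : Type*} [Fintype V] (A : Set (V × V))
    (n k : ℕ) (hA : IsDigraph A) (hn : Fintype.card V = n)
    (h2 : 2 ≤ k) (hk : k ≤ n) :
    (lamK A k + lamK (complArcs A) k ≤ n - 1 ∧
      (lamK A k + lamK (complArcs A) k = 0 ↔
        arcConn A = 0 ∧ arcConn (complArcs A) = 0)) ∧
    ((lamK A k : ℝ) * (lamK (complArcs A) k : ℝ) ≤ (((n : ℝ) - 1) / 2) ^ 2 ∧
      (lamK A k * lamK (complArcs A) k = 0 ↔
        arcConn A = 0 ∨ arcConn (complArcs A) = 0)) := by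
  classical
  have hcard : 2 ≤ Fintype.card V := by omega
  -- pick a k-set S and a pair u ≠ w in it
  obtain ⟨S, _, hScard⟩ := Finset.exists_superset_card_eq (s := (∅ : Finset V)) (n := k)
    (by simp) (by omega)
  obtain ⟨u, hu, w, hw, huw⟩ := Finset.one_lt_card.mp (by omega : 1 < S.card)
  have hu' : u ∈ (↑S : Set V) := by simpa using hu
  have hw' : w ∈ (↑S : Set V) := by simpa using hw
  have h1 : lamK A k ≤ (Set.toFinite {v | (u, v) ∈ A}).toFinset.card :=
    le_trans (lamK_le_lamS hScard) (lamS_le hu' hw' huw)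
  have h2' : lamK (complArcs A) k ≤
      (Set.toFinite {v | (u, v) ∈ complArcs A}).toFinset.card :=
    le_trans (lamK_le_lamS hScard) (lamS_le hu' hw' huw)
  have hsum : lamK A k + lamK (complArcs A) k ≤ n - 1 := by
    have := outdeg_sum_le A hA u
    omega
  have hiff1 : lamK A k = 0 ↔ arcConn A = 0 := by
    rw [lamK_eq_zero_iff A hn h2 hk, arcConn_eq_zero_iff A hcard]
  have hiff2 : lamK (complArcs A) k = 0 ↔ arcConn (complArcs A) = 0 := by
    rw [lamK_eq_zero_iff (complArcs A) hn h2 hk, arcConn_eq_zero_iff (complArcs A) hcard]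
  refine ⟨⟨hsum, ?_⟩, ?_, ?_⟩
  · rw [Nat.add_eq_zero, hiff1, hiff2]
  · have hsumR : (lamK A k : ℝ) + (lamK (complArcs A) k : ℝ) ≤ (n : ℝ) - 1 := by
      have : ((lamK A k + lamK (complArcs A) k : ℕ) : ℝ) ≤ ((n - 1 : ℕ) : ℝ) := by
        exact_mod_cast hsum
      rw [Nat.cast_sub (by omega : 1 ≤ n)] at this
      push_cast at this
      linarith
    have ha : (0:ℝ) ≤ (lamK A k : ℝ) := Nat.cast_nonneg _
    have hb : (0:ℝ) ≤ (lamK (complArcs A) k : ℝ) := Nat.cast_nonneg _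
    nlinarith [sq_nonneg ((lamK A k : ℝ) - (lamK (complArcs A) k : ℝ)),
      mul_nonneg (sub_nonneg.2 hsumR) (add_nonneg ha hb)]
  · rw [Nat.mul_eq_zero, hiff1, hiff2]
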